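/- In the same category, (ker e, e₁ ∘ P_{M₁}|_{ker e}) where e(ξ,η) = e₁ξ + e₂η, is a product of (M₁,e₁) and (M₂,e₂): the projections f_j obtained by restricting the coordinate projections to ker e (with a sign on the second coordinate) are morphisms to (M_j,e_j), and for any object (N,g) with morphisms h_j : (N,g) → (M_j,e_j), the map h = (h₁, −h₂) takes values in ker e, is the unique morphism with f_j ∘ h = h_j, and satisfies e₁ P_{M₁} h = g. -/

import Mathlib

universe u

/-- In the slice category of pairs `(M, e)` of a Hilbert space with a bounded
injective linear map into a fixed Hilbert space `H`, the meet
`(ker e, e₁ ∘ P_{M₁}|_{ker e})` — where `e : M₁ ⊕₂ M₂ → H`, `e(ξ,η) = e₁ ξ + e₂ η` — is a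
product of `(M₁, e₁)` and `(M₂, e₂)`: the coordinate maps `f₁(ξ,η) = ξ` and `f₂(ξ,η) = −η`
restricted to `ker e` are injective morphisms to `(M₁, e₁)` and `(M₂, e₂)`, and for any object
`(N, g)` with morphisms `h_j : (N, g) → (M_j, e_j)` the map `h = (h₁, −h₂)` takes values in
`ker e`, satisfies `f_j ∘ h = h_j` and `e₁ P_{M₁} h = g`, and is the unique such morphism. -/
theorem meet_is_product
    {H M₁ M₂ : Type*}
    [NormedAddCommGroup H] [InnerProductSpace ℂ H] [CompleteSpace H]
    [NormedAddCommGroup M₁] [InnerProductSpace ℂ M₁] [CompleteSpace M₁]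
    [NormedAddCommGroup M₂] [InnerProductSpace ℂ M₂] [CompleteSpace M₂]
    (e₁ : M₁ →L[ℂ] H) (e₂ : M₂ →L[ℂ] H)
    (h₁ : Function.Injective e₁) (h₂ : Function.Injective e₂)
    (e : WithLp 2 (M₁ × M₂) →L[ℂ] H)
    (he : ∀ p, e p = e₁ (WithLp.equiv 2 (M₁ × M₂) p).1 + e₂ (WithLp.equiv 2 (M₁ × M₂) p).2) :
    -- the coordinate maps on `ker e` are injective
    Function.Injective (fun p : LinearMap.ker (e : WithLp 2 (M₁ × M₂) →ₗ[ℂ] H) =>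
      (WithLp.equiv 2 (M₁ × M₂) (p : WithLp 2 (M₁ × M₂))).1) ∧
    Function.Injective (fun p : LinearMap.ker (e : WithLp 2 (M₁ × M₂) →ₗ[ℂ] H) =>
      -(WithLp.equiv 2 (M₁ × M₂) (p : WithLp 2 (M₁ × M₂))).2) ∧
    -- they are morphisms to `(M₁, e₁)`, `(M₂, e₂)` with the same composite structure map
    (∀ p : LinearMap.ker (e : WithLp 2 (M₁ × M₂) →ₗ[ℂ] H),
      e₂ (-(WithLp.equiv 2 (M₁ × M₂) (p : WithLp 2 (M₁ × M₂))).2) =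
      e₁ (WithLp.equiv 2 (M₁ × M₂) (p : WithLp 2 (M₁ × M₂))).1) ∧
    -- universal property
    (∀ (N : Type u) (_ : NormedAddCommGroup N), ∀ (_ : InnerProductSpace ℂ N)
        (_ : CompleteSpace N) (g : N →L[ℂ] H), Function.Injective g →
      ∀ (hm₁ : N →L[ℂ] M₁) (hm₂ : N →L[ℂ] M₂),
        Function.Injective hm₁ → Function.Injective hm₂ →
        e₁.comp hm₁ = g → e₂.comp hm₂ = g →
        ∃! h : N →L[ℂ] ↥(LinearMap.ker (e : WithLp 2 (M₁ × M₂) →ₗ[ℂ] H)),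
          Function.Injective h ∧
          (∀ n : N, (WithLp.equiv 2 (M₁ × M₂) ((h n : ↥(LinearMap.ker (e : WithLp 2 (M₁ × M₂) →ₗ[ℂ] H))) :
              WithLp 2 (M₁ × M₂))).1 = hm₁ n) ∧
          (∀ n : N, -(WithLp.equiv 2 (M₁ × M₂) ((h n : ↥(LinearMap.ker (e : WithLp 2 (M₁ × M₂) →ₗ[ℂ] H))) :
              WithLp 2 (M₁ × M₂))).2 = hm₂ n) ∧
          (∀ n : N, e₁ ((WithLp.equiv 2 (M₁ × M₂) ((h n : ↥(LinearMap.ker (e : WithLp 2 (M₁ × M₂) →ₗ[ℂ] H))) :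
              WithLp 2 (M₁ × M₂))).1) = g n)) := by

  have key : ∀ p : LinearMap.ker (e : WithLp 2 (M₁ × M₂) →ₗ[ℂ] H),
      e₂ (-(WithLp.equiv 2 (M₁ × M₂) (p : WithLp 2 (M₁ × M₂))).2) =
      e₁ (WithLp.equiv 2 (M₁ × M₂) (p : WithLp 2 (M₁ × M₂))).1 := by
    intro p
    have hp : e (p : WithLp 2 (M₁ × M₂)) = 0 := p.2
    rw [he] at hp
    rw [map_neg]
    exact (eq_neg_of_add_eq_zero_left hp).symm
  have coord_ext : ∀ p q : LinearMap.ker (e : WithLp 2 (M₁ × M₂) →ₗ[ℂ] H),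
      (WithLp.equiv 2 (M₁ × M₂) (p : WithLp 2 (M₁ × M₂))).1 =
      (WithLp.equiv 2 (M₁ × M₂) (q : WithLp 2 (M₁ × M₂))).1 →
      (WithLp.equiv 2 (M₁ × M₂) (p : WithLp 2 (M₁ × M₂))).2 =
      (WithLp.equiv 2 (M₁ × M₂) (q : WithLp 2 (M₁ × M₂))).2 → p = q := by
    intro p q hfst hsnd
    apply Subtype.ext
    exact (WithLp.equiv 2 (M₁ × M₂)).injective (Prod.ext hfst hsnd)
  refine ⟨?_, ?_, key, ?_⟩
  · intro p q hpq
    simp only at hpq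
    have hsnd : (WithLp.equiv 2 (M₁ × M₂) (p : WithLp 2 (M₁ × M₂))).2 =
        (WithLp.equiv 2 (M₁ × M₂) (q : WithLp 2 (M₁ × M₂))).2 := by
      have := h₂ (((key p).trans (congrArg e₁ hpq)).trans (key q).symm)
      exact neg_injective this
    exact coord_ext p q hpq hsnd
  · intro p q hpq
    simp only [neg_inj] at hpq
    have hfst : (WithLp.equiv 2 (M₁ × M₂) (p : WithLp 2 (M₁ × M₂))).1 =
        (WithLp.equiv 2 (M₁ × M₂) (q : WithLp 2 (M₁ × M₂))).1 := by
      apply h₁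
      rw [← key p, ← key q, hpq]
    exact coord_ext p q hfst hpq
  · intro N _ _ _ g hg hm₁ hm₂ hinj₁ hinj₂ hc₁ hc₂
    set T : N →L[ℂ] WithLp 2 (M₁ × M₂) :=
      ((WithLp.prodContinuousLinearEquiv 2 ℂ M₁ M₂).symm :
        (M₁ × M₂) →L[ℂ] WithLp 2 (M₁ × M₂)).comp (hm₁.prod (-hm₂)) with hT
    have hTcoord : ∀ n, (WithLp.equiv 2 (M₁ × M₂) (T n)) = (hm₁ n, -(hm₂ n)) := by
      intro n; rfl
    have hmem : ∀ n, T n ∈ LinearMap.ker (e : WithLp 2 (M₁ × M₂) →ₗ[ℂ] H) := by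
      intro n
      have : e (T n) = e₁ (hm₁ n) + e₂ (-(hm₂ n)) := by
        rw [he, hTcoord]
      rw [LinearMap.mem_ker, ContinuousLinearMap.coe_coe]
      rw [this, map_neg]
      have g1 : e₁ (hm₁ n) = g n := congrFun (congrArg DFunLike.coe hc₁) n
      have g2 : e₂ (hm₂ n) = g n := congrFun (congrArg DFunLike.coe hc₂) n
      rw [g1, g2, add_neg_cancel]
    refine ⟨T.codRestrict (LinearMap.ker (e : WithLp 2 (M₁ × M₂) →ₗ[ℂ] H)) hmem, ⟨?_, ?_, ?_, ?_⟩, ?_⟩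
    · intro a b hab
      apply hinj₁
      have : (hm₁ a, -(hm₂ a)) = (hm₁ b, -(hm₂ b)) := by
        rw [← hTcoord, ← hTcoord]
        exact congrArg (WithLp.equiv 2 (M₁ × M₂)) (congrArg Subtype.val hab)
      exact (Prod.ext_iff.mp this).1
    · intro n
      show (WithLp.equiv 2 (M₁ × M₂) (T n)).1 = hm₁ n
      rw [hTcoord]
    · intro n
      show -(WithLp.equiv 2 (M₁ × M₂) (T n)).2 = hm₂ n
      rw [hTcoord]; simp
    · intro n
      show e₁ (WithLp.equiv 2 (M₁ × M₂) (T n)).1 = g n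
      rw [hTcoord]
      exact congrFun (congrArg DFunLike.coe hc₁) n
    · rintro h' ⟨-, hf1, hf2, -⟩
      apply ContinuousLinearMap.ext
      intro n
      apply coord_ext
      · show _ = (WithLp.equiv 2 (M₁ × M₂) (T n)).1
        rw [hTcoord, hf1]
      · show _ = (WithLp.equiv 2 (M₁ × M₂) (T n)).2
        rw [hTcoord]
        have := hf2 n
        simp only [neg_eq_iff_eq_neg] at this
        exact this
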